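/- Johnson's rule produces an optimal schedule for the two-machine flow shop makespan problem: the permutation that first orders jobs with p_{1j} ≤ p_{2j} by nondecreasing p_{1j} and then the remaining jobs by nonincreasing p_{2j} achieves makespan equal to the minimum makespan over all feasible schedules. -/

import Mathlib

open Finset



namespace JRAux
variable {n : ℕ}

/-- fold computing makespan of a permutation schedule given in list order -/
def f (p1 p2 : Fin n → ℝ) : ℝ → ℝ → List (Fin n) → ℝ
  | _, t2, [] => t2
  | t1, t2, j :: L => f p1 p2 (t1 + p1 j) (max (t1 + p1 j) t2 + p2 j) L

variable (p1 p2 : Fin n → ℝ)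

lemma f_mono : ∀ (L : List (Fin n)) {t1 t2 t1' t2' : ℝ}, t1 ≤ t1' → t2 ≤ t2' →
    f p1 p2 t1 t2 L ≤ f p1 p2 t1' t2' L
  | [], _, _, _, _, _, h2 => h2
  | j :: L, t1, t2, t1', t2', h1, h2 => by
      simp only [f]
      exact f_mono L (by linarith) (by
        have : max (t1 + p1 j) t2 ≤ max (t1' + p1 j) t2' :=
          max_le_max (by linarith) h2
        linarith)

lemma f_swap {x y : Fin n} (h : min (p1 y) (p2 x) ≤ min (p1 x) (p2 y))
    (L : List (Fin n)) (t1 t2 : ℝ) :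
    f p1 p2 t1 t2 (y :: x :: L) ≤ f p1 p2 t1 t2 (x :: y :: L) := by
  have hx : min (p1 y) (p2 x) ≤ p1 x := h.trans (min_le_left _ _)
  have hy : min (p1 y) (p2 x) ≤ p2 y := h.trans (min_le_right _ _)
  simp only [f]
  apply f_mono
  · linarith
  · simp only [← max_add_add_right]
    rcases le_total (p1 y) (p2 x) with h1 | h1
    · rw [min_eq_left h1] at hx hy
      refine max_le ?_ (max_le ?_ ?_) <;> simp only [le_max_iff]
      · exact Or.inr (Or.inl (by linarith))
      · exact Or.inr (Or.inl (by linarith))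
      · exact Or.inr (Or.inr (by linarith))
    · rw [min_eq_right h1] at hx hy
      refine max_le ?_ (max_le ?_ ?_) <;> simp only [le_max_iff]
      · exact Or.inl (by linarith)
      · exact Or.inl (by linarith)
      · exact Or.inr (Or.inr (by linarith))

lemma f_move_front {j : Fin n} :
    ∀ (A : List (Fin n)) (B : List (Fin n)) (t1 t2 : ℝ),
      (∀ a ∈ A, min (p1 j) (p2 a) ≤ min (p1 a) (p2 j)) →
      f p1 p2 t1 t2 (j :: (A ++ B)) ≤ f p1 p2 t1 t2 (A ++ j :: B)
  | [], B, t1, t2, _ => le_rfl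
  | a :: A, B, t1, t2, hA => by
      have h1 : f p1 p2 t1 t2 (j :: a :: (A ++ B)) ≤ f p1 p2 t1 t2 (a :: j :: (A ++ B)) :=
        f_swap p1 p2 (hA a (by simp)) _ _ _
      refine h1.trans ?_
      show f p1 p2 _ _ (j :: (A ++ B)) ≤ f p1 p2 _ _ (A ++ j :: B)
      exact f_move_front A B _ _ (fun b hb => hA b (by simp [hb]))

/-- the exchange argument: a Johnson-sorted list minimizes the fold makespan
among all permutations of it -/
lemma f_sorted_min :
    ∀ (J L : List (Fin n)) (t1 t2 : ℝ),
      J.Pairwise (fun a b => min (p1 a) (p2 b) ≤ min (p1 b) (p2 a)) →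
      L.Perm J → f p1 p2 t1 t2 J ≤ f p1 p2 t1 t2 L
  | [], L, t1, t2, _, hperm => by
      rw [List.perm_nil.mp hperm]
  | j :: J', L, t1, t2, hpw, hperm => by
      have hj : j ∈ L := hperm.mem_iff.mpr (by simp)
      obtain ⟨A, B, rfl⟩ := List.append_of_mem hj
      have hAB : (A ++ B).Perm J' := by
        have h1 : (A ++ j :: B).Perm (j :: (A ++ B)) := List.perm_middle.symm.symm
        exact (List.perm_cons j).mp ((List.perm_middle.symm.trans hperm).symm).symm
      rw [List.pairwise_cons] at hpw
      have step1 : f p1 p2 t1 t2 (j :: J') ≤ f p1 p2 t1 t2 (j :: (A ++ B)) := by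
        simp only [f]
        exact f_sorted_min J' (A ++ B) _ _ hpw.2 hAB
      refine step1.trans ?_
      exact f_move_front p1 p2 A B t1 t2 (fun a ha =>
        hpw.1 a (hAB.mem_iff.mp (by simp [ha])))

lemma f_ge_t2 : ∀ (L : List (Fin n)) (t1 t2 : ℝ),
    t2 + (L.map p2).sum ≤ f p1 p2 t1 t2 L
  | [], _, t2 => by simp [f]
  | j :: L, t1, t2 => by
      simp only [f, List.map_cons, List.sum_cons]
      calc t2 + (p2 j + (L.map p2).sum)
          ≤ (max (t1 + p1 j) t2 + p2 j) + (L.map p2).sum := by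
            have := le_max_right (t1 + p1 j) t2; linarith
        _ ≤ _ := f_ge_t2 L _ _

lemma f_ge_split : ∀ (m : ℕ) (g : Fin m → Fin n) (ν : Fin m) (t1 t2 : ℝ),
    t1 + (∑ k ∈ univ.filter (fun k => k ≤ ν), p1 (g k))
       + (∑ k ∈ univ.filter (fun k => ν ≤ k), p2 (g k))
      ≤ f p1 p2 t1 t2 (List.ofFn g)
  | 0, _, ν, _, _ => ν.elim0
  | m + 1, g, ν, t1, t2 => by
      rw [List.ofFn_succ]
      simp only [f]
      induction ν using Fin.cases with
      | zero =>
          have h1 : (univ.filter (fun k : Fin (m+1) => k ≤ 0)) = {0} := by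
            ext k; simp [Fin.le_zero_iff]
          have h2 : (univ.filter (fun k : Fin (m+1) => 0 ≤ k)) = univ := by
            ext k; simp [Fin.zero_le]
          rw [h1, h2, Finset.sum_singleton, Fin.sum_univ_succ]
          have h3 := f_ge_t2 p1 p2 (List.ofFn (g ∘ Fin.succ)) (t1 + p1 (g 0))
            (max (t1 + p1 (g 0)) t2 + p2 (g 0))
          rw [List.map_ofFn, List.sum_ofFn] at h3
          have h4 : t1 + p1 (g 0) ≤ max (t1 + p1 (g 0)) t2 := le_max_left _ _
          simp only [Function.comp_def] at h3 ⊢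
          linarith
      | succ μ =>
          have h1 : (∑ k ∈ univ.filter (fun k : Fin (m+1) => k ≤ μ.succ), p1 (g k))
              = p1 (g 0) + ∑ k ∈ univ.filter (fun k : Fin m => k ≤ μ), p1 (g k.succ) := by
            rw [Finset.sum_filter, Finset.sum_filter, Fin.sum_univ_succ]
            simp [Fin.zero_le, Fin.succ_le_succ_iff]
          have h2 : (∑ k ∈ univ.filter (fun k : Fin (m+1) => μ.succ ≤ k), p2 (g k))
              = ∑ k ∈ univ.filter (fun k : Fin m => μ ≤ k), p2 (g k.succ) := by
            rw [Finset.sum_filter, Finset.sum_filter, Fin.sum_univ_succ]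
            have : ¬ (μ.succ ≤ (0 : Fin (m+1))) := by
              simp [Fin.le_zero_iff, Fin.succ_ne_zero]
            simp [this, Fin.succ_le_succ_iff]
          rw [h1, h2]
          have h3 := f_ge_split m (g ∘ Fin.succ) μ (t1 + p1 (g 0))
            (max (t1 + p1 (g 0)) t2 + p2 (g 0))
          simp only [Function.comp_def] at h3 ⊢
          linarith

lemma packing {ι : Type*} [DecidableEq ι] (s ℓ : ι → ℝ) (F : Finset ι) :
    ∀ a b : ℝ, (∀ i ∈ F, 0 ≤ ℓ i) → (∀ i ∈ F, a ≤ s i) → (∀ i ∈ F, s i + ℓ i ≤ b) →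
    (∀ i ∈ F, ∀ j ∈ F, i ≠ j → s i + ℓ i ≤ s j ∨ s j + ℓ j ≤ s i) →
    a ≤ b → ∑ i ∈ F, ℓ i ≤ b - a := by
  induction F using Finset.strongInduction with
  | _ F ih =>
    intro a b hl ha hb hd hab
    rcases F.eq_empty_or_nonempty with rfl | hne
    · simp; linarith
    · obtain ⟨i0, hi0, hmax⟩ := Finset.exists_max_image F s hne
      have hsub : F.erase i0 ⊂ F := Finset.erase_ssubset hi0
      have hrec := fun (a' b' : ℝ) => ih (F.erase i0) hsub a' b'
        (fun i hi => hl i (Finset.mem_of_mem_erase hi))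
      by_cases hall : ∀ j ∈ F.erase i0, s j + ℓ j ≤ s i0
      · have h1 : ∑ i ∈ F.erase i0, ℓ i ≤ s i0 - a :=
          hrec a (s i0) (fun i hi => ha i (Finset.mem_of_mem_erase hi)) hall
            (fun i hi j hj hij => hd i (Finset.mem_of_mem_erase hi)
              j (Finset.mem_of_mem_erase hj) hij) (ha i0 hi0)
        have h2 := Finset.sum_erase_add F ℓ hi0
        have h3 := hb i0 hi0
        linarith [h2.symm.le]
      · push_neg at hall
        obtain ⟨j, hj, hjgt⟩ := hall
        have hji0 : j ≠ i0 := Finset.ne_of_mem_erase hj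
        have hdisj := hd i0 hi0 j (Finset.mem_of_mem_erase hj) (Ne.symm hji0)
        have hl0 : ℓ i0 = 0 := by
          rcases hdisj with h | h
          · have := hmax j (Finset.mem_of_mem_erase hj)
            have := hl i0 hi0
            linarith
          · exact absurd h (not_le.mpr hjgt)
        have h1 : ∑ i ∈ F.erase i0, ℓ i ≤ b - a :=
          hrec a b (fun i hi => ha i (Finset.mem_of_mem_erase hi))
            (fun i hi => hb i (Finset.mem_of_mem_erase hi))
            (fun i hi j' hj' hij => hd i (Finset.mem_of_mem_erase hi)
              j' (Finset.mem_of_mem_erase hj') hij) hab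
        have h2 := Finset.sum_erase_add F ℓ hi0
        linarith [h2.symm.le]

lemma sum_lt_succ_eq (q : Fin n → ℝ) (r : ℕ) (hr : r < n) :
    (∑ i ∈ univ.filter (fun i : Fin n => (i : ℕ) < r + 1), q i)
      = (∑ i ∈ univ.filter (fun i : Fin n => (i : ℕ) < r), q i) + q ⟨r, hr⟩ := by
  have hins : (univ.filter (fun i : Fin n => (i : ℕ) < r + 1))
      = insert (⟨r, hr⟩ : Fin n) (univ.filter (fun i : Fin n => (i : ℕ) < r)) := by
    ext i
    simp only [Finset.mem_filter, Finset.mem_univ, true_and, Finset.mem_insert]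
    constructor
    · intro h
      rcases Nat.lt_succ_iff_lt_or_eq.mp h with h | h
      · exact Or.inr h
      · exact Or.inl (Fin.ext h)
    · rintro (rfl | h)
      · simp
      · omega
  rw [hins, Finset.sum_insert (by simp)]
  ring

lemma f_le_feas (τ : Equiv.Perm (Fin n)) (S2 : Fin n → ℝ) (Cmax : ℝ) (hn : 0 < n)
    (hpair : ∀ k l : Fin n, k < l → S2 (τ k) + p2 (τ k) ≤ S2 (τ l))
    (hii : ∀ (r : ℕ) (hr : r < n),
      (∑ i ∈ univ.filter (fun i : Fin n => (i : ℕ) < r + 1), p1 (τ i)) ≤ S2 (τ ⟨r, hr⟩))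
    (hC : ∀ j, S2 j + p2 j ≤ Cmax) (h0 : ∀ j, 0 ≤ S2 j) :
    f p1 p2 0 0 (List.ofFn ⇑τ) ≤ Cmax := by
  have hdrop : ∀ (r : ℕ) (hr : r < n),
      (List.ofFn ⇑τ).drop r = τ ⟨r, hr⟩ :: (List.ofFn ⇑τ).drop (r + 1) := by
    intro r hr
    have hlen : r < (List.ofFn ⇑τ).length := by simpa using hr
    rw [List.drop_eq_getElem_cons hlen, List.getElem_ofFn]
  have key : ∀ (k r : ℕ) (hr : r < n), n - r = k + 1 → ∀ t1 t2 : ℝ,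
      t1 ≤ (∑ i ∈ univ.filter (fun i : Fin n => (i : ℕ) < r), p1 (τ i)) →
      t2 ≤ S2 (τ ⟨r, hr⟩) →
      f p1 p2 t1 t2 ((List.ofFn ⇑τ).drop r) ≤ Cmax := by
    intro k
    induction k with
    | zero =>
        intro r hr hk t1 t2 ht1 ht2
        have hrn : r + 1 = n := by omega
        have hnil : (List.ofFn ⇑τ).drop (r + 1) = [] := by
          apply List.drop_eq_nil_of_le
          simp [hrn]
        rw [hdrop r hr, hnil]
        simp only [f]
        have hb : t1 + p1 (τ ⟨r, hr⟩) ≤ S2 (τ ⟨r, hr⟩) := by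
          have := hii r hr
          rw [sum_lt_succ_eq (fun i => p1 (τ i)) r hr] at this
          linarith
        have : max (t1 + p1 (τ ⟨r, hr⟩)) t2 ≤ S2 (τ ⟨r, hr⟩) := max_le hb ht2
        calc max (t1 + p1 (τ ⟨r, hr⟩)) t2 + p2 (τ ⟨r, hr⟩)
            ≤ S2 (τ ⟨r, hr⟩) + p2 (τ ⟨r, hr⟩) := by linarith
          _ ≤ Cmax := hC _
    | succ k ihk =>
        intro r hr hk t1 t2 ht1 ht2
        have hr1 : r + 1 < n := by omega
        rw [hdrop r hr]
        simp only [f]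
        apply ihk (r + 1) hr1 (by omega)
        · rw [sum_lt_succ_eq (fun i => p1 (τ i)) r hr]
          linarith
        · have hb : t1 + p1 (τ ⟨r, hr⟩) ≤ S2 (τ ⟨r, hr⟩) := by
            have := hii r hr
            rw [sum_lt_succ_eq (fun i => p1 (τ i)) r hr] at this
            linarith
          have h1 : max (t1 + p1 (τ ⟨r, hr⟩)) t2 ≤ S2 (τ ⟨r, hr⟩) := max_le hb ht2
          have h2 : S2 (τ ⟨r, hr⟩) + p2 (τ ⟨r, hr⟩) ≤ S2 (τ ⟨r + 1, hr1⟩) :=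
            hpair _ _ (Fin.mk_lt_mk.mpr (by omega))
          linarith
  have := key (n - 1) 0 hn (by omega) 0 0 (by simp) (h0 _)
  simpa using this

lemma exists_schedule (hn : 0 < n) (hp1 : ∀ j, 0 ≤ p1 j) (hp2 : ∀ j, 0 ≤ p2 j)
    (σ : Equiv.Perm (Fin n)) :
    ∃ S1 S2 : Fin n → ℝ,
      (∀ j, 0 ≤ S1 j) ∧ (∀ j, S1 j + p1 j ≤ S2 j) ∧
      (∀ j k, j ≠ k → S1 j + p1 j ≤ S1 k ∨ S1 k + p1 k ≤ S1 j) ∧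
      (∀ j k, j ≠ k → S2 j + p2 j ≤ S2 k ∨ S2 k + p2 k ≤ S2 j) ∧
      Finset.univ.sup' ⟨⟨0, hn⟩, Finset.mem_univ _⟩ (fun j => S2 j + p2 j)
        = Finset.univ.sup' ⟨⟨0, hn⟩, Finset.mem_univ _⟩ (fun ν : Fin n =>
          (∑ k ∈ Finset.univ.filter (fun k => k ≤ ν), p1 (σ k)) +
          (∑ k ∈ Finset.univ.filter (fun k => ν ≤ k), p2 (σ k))) := by
  classical
  set pref1 : Fin n → ℝ := fun k => ∑ i ∈ univ.filter (fun i => i ≤ k), p1 (σ i) with hpref1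
  set mid2 : Fin n → Fin n → ℝ :=
    fun ν k => ∑ i ∈ univ.filter (fun i => ν ≤ i ∧ i ≤ k), p2 (σ i) with hmid2
  have hne : ∀ k : Fin n, (univ.filter (fun ν => ν ≤ k)).Nonempty :=
    fun k => ⟨k, by simp⟩
  set C2 : Fin n → ℝ :=
    fun k => (univ.filter (fun ν => ν ≤ k)).sup' (hne k) (fun ν => pref1 ν + mid2 ν k)
    with hC2
  set S1' : Fin n → ℝ := fun k => ∑ i ∈ univ.filter (fun i => i < k), p1 (σ i) with hS1'
  -- (a) pref1 k = S1' k + p1 (σ k)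
  have ha : ∀ k, pref1 k = S1' k + p1 (σ k) := by
    intro k
    have : (univ.filter (fun i => i ≤ k)) = insert k (univ.filter (fun i : Fin n => i < k)) := by
      ext i
      simp only [Finset.mem_filter, Finset.mem_univ, true_and, Finset.mem_insert]
      rw [le_iff_lt_or_eq]
      tauto
    rw [hpref1]
    simp only
    rw [this, Finset.sum_insert (by simp)]
    simp [hS1']
    ring
  -- (b) terms below sup'
  have hb : ∀ k ν : Fin n, ν ≤ k → pref1 ν + mid2 ν k ≤ C2 k := by
    intro k ν hνk
    exact le_sup' (f := fun ν => pref1 ν + mid2 ν k) (by simp [hνk])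
  -- mid2 k k = p2 (σ k)
  have hmidkk : ∀ k, mid2 k k = p2 (σ k) := by
    intro k
    have : (univ.filter (fun i : Fin n => k ≤ i ∧ i ≤ k)) = {k} := by
      ext i
      simp only [Finset.mem_filter, Finset.mem_univ, true_and, Finset.mem_singleton]
      constructor
      · rintro ⟨h1, h2⟩; exact le_antisymm h2 h1
      · rintro rfl; exact ⟨le_rfl, le_rfl⟩
    rw [hmid2]; simp only; rw [this, Finset.sum_singleton]
  -- (c) C2 k ≥ pref1 k + p2 (σ k)
  have hc : ∀ k, pref1 k + p2 (σ k) ≤ C2 k := by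
    intro k
    have := hb k k le_rfl
    rwa [hmidkk k] at this
  -- (d) a < b → C2 a + p2 (σ b) ≤ C2 b
  have hd : ∀ a b : Fin n, a < b → C2 a + p2 (σ b) ≤ C2 b := by
    intro a b hab
    rw [← le_sub_iff_add_le]
    apply Finset.sup'_le
    intro ν hν
    rw [Finset.mem_filter] at hν
    have hνa : ν ≤ a := hν.2
    rw [le_sub_iff_add_le]
    have hmid : mid2 ν a + p2 (σ b) ≤ mid2 ν b := by
      have hsub : insert b (univ.filter (fun i : Fin n => ν ≤ i ∧ i ≤ a))
          ⊆ univ.filter (fun i : Fin n => ν ≤ i ∧ i ≤ b) := by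
        intro i hi
        rcases Finset.mem_insert.mp hi with rfl | hi
        · simp [hνa.trans hab.le, le_rfl]
        · rw [Finset.mem_filter] at hi ⊢
          exact ⟨Finset.mem_univ _, hi.2.1, hi.2.2.trans hab.le⟩
      have hnotmem : b ∉ univ.filter (fun i : Fin n => ν ≤ i ∧ i ≤ a) := by
        simp only [Finset.mem_filter, Finset.mem_univ, true_and, not_and]
        intro _; exact not_le.mpr hab
      calc mid2 ν a + p2 (σ b)
          = ∑ i ∈ insert b (univ.filter (fun i : Fin n => ν ≤ i ∧ i ≤ a)), p2 (σ i) := by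
            rw [Finset.sum_insert hnotmem, hmid2]; ring
        _ ≤ mid2 ν b := Finset.sum_le_sum_of_subset_of_nonneg hsub
            (fun i _ _ => hp2 (σ i))
    have := hb b ν (hνa.trans hab.le)
    linarith
  -- (e) monotonicity of C2
  have he : ∀ a b : Fin n, a ≤ b → C2 a ≤ C2 b := by
    intro a b hab
    rcases eq_or_lt_of_le hab with rfl | hab
    · exact le_rfl
    · have := hd a b hab
      have := hp2 (σ b)
      linarith
  refine ⟨fun j => S1' (σ.symm j), fun j => C2 (σ.symm j) - p2 j, ?_, ?_, ?_, ?_, ?_⟩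
  · intro j
    exact Finset.sum_nonneg (fun i _ => hp1 (σ i))
  · intro j
    beta_reduce
    have h1 := hc (σ.symm j)
    have h2 := ha (σ.symm j)
    rw [Equiv.apply_symm_apply] at h1 h2
    linarith
  · intro j k hjk
    have hne' : σ.symm j ≠ σ.symm k := fun h => hjk (σ.symm.injective h)
    have key : ∀ a b : Fin n, a < b → S1' a + p1 (σ a) ≤ S1' b := by
      intro a b hab
      rw [← ha a]
      apply Finset.sum_le_sum_of_subset_of_nonneg _ (fun i _ _ => hp1 (σ i))
      intro i hi
      rw [Finset.mem_filter] at hi ⊢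
      exact ⟨Finset.mem_univ _, lt_of_le_of_lt hi.2 hab⟩
    rcases lt_or_gt_of_ne hne' with h | h
    · left
      have := key _ _ h
      rwa [Equiv.apply_symm_apply] at this
    · right
      have := key _ _ h
      rwa [Equiv.apply_symm_apply] at this
  · intro j k hjk
    have hne' : σ.symm j ≠ σ.symm k := fun h => hjk (σ.symm.injective h)
    rcases lt_or_gt_of_ne hne' with h | h
    · left
      beta_reduce
      have := hd _ _ h
      rw [Equiv.apply_symm_apply] at this
      linarith
    · right
      beta_reduce
      have := hd _ _ h
      rw [Equiv.apply_symm_apply] at this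
      linarith
  · -- makespan equality
    have hfun : ∀ j : Fin n, C2 (σ.symm j) - p2 j + p2 j = C2 (σ.symm j) := fun j => by ring
    have hlast : ∀ i : Fin n, i ≤ ⟨n - 1, by omega⟩ := by
      intro i
      have h2 := i.2
      have h3 : (i : ℕ) ≤ n - 1 := by omega
      exact Fin.le_def.mpr (by simpa using h3)
    -- suffix sums
    have hsuff : ∀ ν : Fin n, mid2 ν ⟨n - 1, by omega⟩
        = ∑ i ∈ univ.filter (fun i => ν ≤ i), p2 (σ i) := by
      intro ν
      rw [hmid2]
      simp only
      congr 1
      ext i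
      simp only [Finset.mem_filter, Finset.mem_univ, true_and]
      exact ⟨fun h => h.1, fun h => ⟨h, hlast i⟩⟩
    apply le_antisymm
    · apply Finset.sup'_le
      intro j _
      rw [hfun j]
      apply Finset.sup'_le
      intro ν hν
      rw [Finset.mem_filter] at hν
      calc pref1 ν + mid2 ν (σ.symm j)
          ≤ pref1 ν + ∑ i ∈ univ.filter (fun i => ν ≤ i), p2 (σ i) := by
            have : mid2 ν (σ.symm j) ≤ ∑ i ∈ univ.filter (fun i => ν ≤ i), p2 (σ i) := by
              rw [hmid2]
              apply Finset.sum_le_sum_of_subset_of_nonneg _ (fun i _ _ => hp2 (σ i))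
              intro i hi
              rw [Finset.mem_filter] at hi ⊢
              exact ⟨Finset.mem_univ _, hi.2.1⟩
            linarith
        _ ≤ _ := le_sup' (f := fun ν : Fin n =>
            (∑ k ∈ univ.filter (fun k => k ≤ ν), p1 (σ k)) +
            (∑ k ∈ univ.filter (fun k => ν ≤ k), p2 (σ k))) (Finset.mem_univ ν)
    · apply Finset.sup'_le
      intro ν _
      have h1 : pref1 ν + mid2 ν ⟨n - 1, by omega⟩ ≤ C2 ⟨n - 1, by omega⟩ :=
        hb _ ν (hlast ν)
      rw [hsuff ν] at h1
      calc (∑ k ∈ univ.filter (fun k => k ≤ ν), p1 (σ k)) +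
            (∑ k ∈ univ.filter (fun k => ν ≤ k), p2 (σ k))
          ≤ C2 ⟨n - 1, by omega⟩ := h1
        _ = C2 (σ.symm (σ ⟨n - 1, by omega⟩)) - p2 (σ ⟨n - 1, by omega⟩)
            + p2 (σ ⟨n - 1, by omega⟩) := by rw [Equiv.symm_apply_apply]; ring
        _ ≤ _ := le_sup' (f := fun j => C2 (σ.symm j) - p2 j + p2 j) (Finset.mem_univ _)

end JRAux

/-- Johnson's rule is optimal for the two-machine flow shop makespan
problem.  The permutation `σ` (where `σ k` is the job in position `k`) first
schedules the jobs with `p₁ ≤ p₂` in nondecreasing order of `p₁` and then the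
remaining jobs in nonincreasing order of `p₂`; the resulting permutation schedule
achieves a makespan equal to the minimum over all feasible schedules. -/
theorem johnson_rule_optimal
    (n : ℕ) (hn : 0 < n) (p1 p2 : Fin n → ℝ)
    (hp1 : ∀ j, 0 ≤ p1 j) (hp2 : ∀ j, 0 ≤ p2 j)
    (σ : Equiv.Perm (Fin n))
    -- jobs with `p₁ ≤ p₂` are scheduled before the jobs with `p₁ > p₂`
    (hfirst : ∀ k l : Fin n, k < l → p2 (σ k) < p1 (σ k) → p2 (σ l) < p1 (σ l))
    -- the jobs with `p₁ ≤ p₂` appear in nondecreasing order of `p₁`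
    (hsort1 : ∀ k l : Fin n, k < l → p1 (σ k) ≤ p2 (σ k) → p1 (σ l) ≤ p2 (σ l) →
      p1 (σ k) ≤ p1 (σ l))
    -- the jobs with `p₁ > p₂` appear in nonincreasing order of `p₂`
    (hsort2 : ∀ k l : Fin n, k < l → p2 (σ k) < p1 (σ k) → p2 (σ l) < p1 (σ l) →
      p2 (σ l) ≤ p2 (σ k)) :
    -- makespan of the Johnson permutation schedule (earliest-start closed form)
    let JM := Finset.univ.sup' ⟨⟨0, hn⟩, Finset.mem_univ _⟩ (fun ν : Fin n =>
      (∑ k ∈ Finset.univ.filter (fun k => k ≤ ν), p1 (σ k)) +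
      (∑ k ∈ Finset.univ.filter (fun k => ν ≤ k), p2 (σ k)))
    -- feasibility of a schedule with start times `S1`, `S2` on machines 1, 2
    let Feas : (Fin n → ℝ) → (Fin n → ℝ) → Prop := fun S1 S2 =>
      (∀ j, 0 ≤ S1 j) ∧ (∀ j, S1 j + p1 j ≤ S2 j) ∧
      (∀ j k, j ≠ k → S1 j + p1 j ≤ S1 k ∨ S1 k + p1 k ≤ S1 j) ∧
      (∀ j k, j ≠ k → S2 j + p2 j ≤ S2 k ∨ S2 k + p2 k ≤ S2 j)
    -- the Johnson makespan is attained by a feasible schedule, and no feasible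
    -- schedule has a smaller makespan
    (∃ S1 S2, Feas S1 S2 ∧
        Finset.univ.sup' ⟨⟨0, hn⟩, Finset.mem_univ _⟩ (fun j => S2 j + p2 j) = JM) ∧
    (∀ S1 S2, Feas S1 S2 →
        JM ≤ Finset.univ.sup' ⟨⟨0, hn⟩, Finset.mem_univ _⟩ (fun j => S2 j + p2 j)) := by
  intro JM Feas
  classical
  constructor
  · obtain ⟨S1, S2, h1, h2, h3, h4, h5⟩ := JRAux.exists_schedule p1 p2 hn hp1 hp2 σ
    exact ⟨S1, S2, ⟨h1, h2, h3, h4⟩, h5⟩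
  · rintro S1 S2 ⟨h0, h12, hm1, hm2⟩
    have hJMdef : JM = Finset.univ.sup' ⟨⟨0, hn⟩, Finset.mem_univ _⟩ (fun ν : Fin n =>
      (∑ k ∈ Finset.univ.filter (fun k => k ≤ ν), p1 (σ k)) +
      (∑ k ∈ Finset.univ.filter (fun k => ν ≤ k), p2 (σ k))) := rfl
    set Cmax := Finset.univ.sup' ⟨⟨0, hn⟩, Finset.mem_univ _⟩ (fun j => S2 j + p2 j)
      with hCmaxdef
    have hS2nonneg : ∀ j, 0 ≤ S2 j := by
      intro j
      have := h0 j; have := hp1 j; have := h12 j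
      linarith
    set τ := Tuple.sort (fun j => toLex (S2 j, p2 j)) with hτ
    have hmono := Tuple.monotone_sort (fun j => toLex (S2 j, p2 j))
    have hS2mono : ∀ k l : Fin n, k ≤ l → S2 (τ k) ≤ S2 (τ l) := by
      intro k l hkl
      have h := hmono hkl
      simp only [Function.comp_apply] at h
      rw [Prod.Lex.le_iff] at h
      rcases h with h | h
      · exact le_of_lt h
      · exact le_of_eq h.1
    have hpair : ∀ k l : Fin n, k < l → S2 (τ k) + p2 (τ k) ≤ S2 (τ l) := by
      intro k l hkl
      have hnejob : τ k ≠ τ l := fun h => (ne_of_lt hkl) (τ.injective h)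
      rcases hm2 (τ k) (τ l) hnejob with h | h
      · exact h
      · have hle := hS2mono k l hkl.le
        have hp2l : p2 (τ l) = 0 := le_antisymm (by linarith) (hp2 _)
        have heq : S2 (τ l) = S2 (τ k) := le_antisymm (by linarith) hle
        have h' := hmono hkl.le
        simp only [Function.comp_apply] at h'
        rw [Prod.Lex.le_iff] at h'
        simp only [ofLex_toLex] at h'
        rcases h' with h' | h'
        · exfalso; linarith
        · have hp2k : p2 (τ k) = 0 := le_antisymm (by linarith [h'.2]) (hp2 _)
          linarith
    have hii : ∀ (r : ℕ) (hr : r < n),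
        (∑ i ∈ Finset.univ.filter (fun i : Fin n => (i : ℕ) < r + 1), p1 (τ i))
          ≤ S2 (τ ⟨r, hr⟩) := by
      intro r hr
      set F := (Finset.univ.filter (fun i : Fin n => (i : ℕ) < r + 1)).image ⇑τ with hF
      have hsum : (∑ i ∈ Finset.univ.filter (fun i : Fin n => (i : ℕ) < r + 1), p1 (τ i))
          = ∑ j ∈ F, p1 j := by
        rw [hF, Finset.sum_image (fun x _ y _ h => τ.injective h)]
      have hpack := JRAux.packing S1 p1 F 0 (S2 (τ ⟨r, hr⟩))
        (fun j _ => hp1 j) (fun j _ => h0 j)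
        ?_ (fun i _ j _ hij => hm1 i j hij) (hS2nonneg _)
      · rw [hsum]; linarith
      · intro j hj
        rw [hF, Finset.mem_image] at hj
        obtain ⟨i, hi, rfl⟩ := hj
        rw [Finset.mem_filter] at hi
        have hile : i ≤ ⟨r, hr⟩ := Fin.le_def.mpr (by simpa using Nat.lt_succ_iff.mp hi.2)
        exact (h12 (τ i)).trans (hS2mono i ⟨r, hr⟩ hile)
    have hfτ : JRAux.f p1 p2 0 0 (List.ofFn ⇑τ) ≤ Cmax :=
      JRAux.f_le_feas p1 p2 τ S2 Cmax hn hpair hii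
        (fun j => le_sup' (fun j => S2 j + p2 j) (Finset.mem_univ j)) hS2nonneg
    have hperm : (List.ofFn ⇑τ).Perm (List.ofFn ⇑σ) := by
      apply List.perm_of_nodup_nodup_toFinset_eq (List.nodup_ofFn.mpr τ.injective)
        (List.nodup_ofFn.mpr σ.injective)
      ext j
      simp [List.mem_ofFn, τ.surjective.range_eq, σ.surjective.range_eq]
      exact ⟨fun _ => σ.surjective j, fun _ => τ.surjective j⟩
    have hpw : (List.ofFn ⇑σ).Pairwise (fun a b => min (p1 a) (p2 b) ≤ min (p1 b) (p2 a)) := by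
      rw [List.pairwise_ofFn]
      intro k l hkl
      by_cases hb1 : p1 (σ k) ≤ p2 (σ k)
      · rcases le_or_gt (p1 (σ l)) (p2 (σ l)) with hb2 | hb2
        · have h := hsort1 k l hkl hb1 hb2
          exact le_min ((min_le_left _ _).trans h) ((min_le_left _ _).trans hb1)
        · rcases le_total (p1 (σ k)) (p2 (σ l)) with h | h
          · rw [min_eq_left h]; exact le_min (by linarith) hb1
          · rw [min_eq_right h]; exact le_min (by linarith) (by linarith)
      · push_neg at hb1
        have hb2 := hfirst k l hkl hb1
        have h := hsort2 k l hkl hb1 hb2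
        exact le_min ((min_le_right _ _).trans (by linarith)) ((min_le_right _ _).trans h)
    have hfσ : JRAux.f p1 p2 0 0 (List.ofFn ⇑σ) ≤ JRAux.f p1 p2 0 0 (List.ofFn ⇑τ) :=
      JRAux.f_sorted_min p1 p2 _ _ 0 0 hpw hperm
    have hJM : JM ≤ JRAux.f p1 p2 0 0 (List.ofFn ⇑σ) := by
      rw [hJMdef]
      apply Finset.sup'_le
      intro ν _
      have := JRAux.f_ge_split p1 p2 n ⇑σ ν 0 0
      linarith
    linarith
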